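/- Estimate for the component map: Let i ∈ 𝕊², and let (f,(i,j)) and (g,(k,l)) be elements of A_i(𝔹⁴) × T. Then d( ((D₁[f,i,j] D₂[f,i,j]; D₃[f,i,j] D₄[f,i,j]), (i,j)), ((D₁[g,k,l] D₂[g,k,l]; D₃[g,k,l] D₄[g,k,l]), (k,l)) ) ≤ 4 ( 1 + (1 + √2) ‖g‖_{A_i(𝔹⁴)} ) · ρ_i( (f,(i,j)), (g,(k,l)) ), where d is the metric of HL(D) and ρ_i((f,(i,j)),(g,(k,l))) = ‖f − g‖_{A_i(𝔹⁴)} + ‖(i,j) − (k,l)‖_{ℝ⁶}. -/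

import Mathlib

noncomputable section

open MeasureTheory Filter

notation "ℍ" => Quaternion ℝ

/-- The set of pure imaginary unit quaternions `𝕊²`. -/
def Sph2 (i : ℍ) : Prop := i.re = 0 ∧ ‖i‖ = 1

/-- Ordered pairs of orthogonal pure imaginary unit quaternions (the set `T`). -/
def OrthPair (i j : ℍ) : Prop := Sph2 i ∧ Sph2 j ∧ (i * star j).re = 0

/-- The slice complex plane `ℂ(i) = {x + y i}`. -/
def CC (i : ℍ) : Set ℍ := {q | ∃ x y : ℝ, q = (x : ℍ) + y • i}

/-- Slice regularity of `f` on `Ω`: real differentiability together with the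
Cauchy–Riemann condition `½(∂/∂x + i ∂/∂y) f = 0` on every slice. -/
def SliceRegularOn (f : ℍ → ℍ) (Ω : Set ℍ) : Prop :=
  ∀ ⦃i : ℍ⦄, Sph2 i → ∀ x y : ℝ, ((x : ℍ) + y • i) ∈ Ω →
    DifferentiableAt ℝ f ((x : ℍ) + y • i) ∧
    fderiv ℝ f ((x : ℍ) + y • i) 1 + i * fderiv ℝ f ((x : ℍ) + y • i) i = 0

/-- Axially symmetric slice domain. -/
structure AxSymSDomain (Ω : Set ℍ) : Prop where
  isOpen : IsOpen Ω
  isConnected : IsConnected Ω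
  real_nonempty : (Ω ∩ Set.range ((↑) : ℝ → ℍ)).Nonempty
  slice_connected : ∀ ⦃i : ℍ⦄, Sph2 i →
    IsConnected {p : ℝ × ℝ | ((p.1 : ℍ) + p.2 • i) ∈ Ω}
  axial : ∀ (x y : ℝ) ⦃i : ℍ⦄, Sph2 i → ((x : ℍ) + y • i) ∈ Ω →
    ∀ ⦃j : ℍ⦄, Sph2 j → ((x : ℍ) + y • j) ∈ Ω

/-- The slice `Ω ∩ ℂ(i)` as a subset of `ℝ²`. -/
def sliceSet (Ω : Set ℍ) (i : ℍ) : Set (ℝ × ℝ) := {p | ((p.1 : ℍ) + p.2 • i) ∈ Ω}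

/-- `‖f‖²_{A_i(Ω)} = ∫_{Ω ∩ ℂ(i)} ‖f‖² dσ_i`. -/
def bergmanNormSq (Ω : Set ℍ) (i : ℍ) (f : ℍ → ℍ) : ℝ :=
  ∫ p in sliceSet Ω i, ‖f ((p.1 : ℍ) + p.2 • i)‖ ^ 2

/-- The slice regular Bergman norm `‖f‖_{A_i(Ω)}`. -/
def bergmanNorm (Ω : Set ℍ) (i : ℍ) (f : ℍ → ℍ) : ℝ :=
  Real.sqrt (bergmanNormSq Ω i f)

/-- Membership in the slice regular Bergman space `A_i(Ω)`. -/
def MemBergman (Ω : Set ℍ) (i : ℍ) (f : ℍ → ℍ) : Prop :=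
  SliceRegularOn f Ω ∧
  IntegrableOn (fun p : ℝ × ℝ => ‖f ((p.1 : ℍ) + p.2 • i)‖ ^ 2) (sliceSet Ω i)

/-- The quaternionic Bergman inner product `⟨f,g⟩ = ∫ conj(f) g dσ_i`. -/
def bergmanInner (Ω : Set ℍ) (i : ℍ) (f g : ℍ → ℍ) : ℍ :=
  ∫ p in sliceSet Ω i, star (f ((p.1 : ℍ) + p.2 • i)) * g ((p.1 : ℍ) + p.2 • i)

/-- The open unit ball `𝔹⁴ ⊆ ℍ`. -/
def B4 : Set ℍ := {q | ‖q‖ < 1}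

/-- The open unit disk `D ⊆ ℝ²`. -/
def unitDisk : Set (ℝ × ℝ) := {p | p.1 ^ 2 + p.2 ^ 2 < 1}

/-- `‖f‖²_{A_i(𝔹⁴)} = ∫_D ‖f(x + yi)‖² dμ(x,y)`. -/
def bergNormSqB (i : ℍ) (f : ℍ → ℍ) : ℝ :=
  ∫ p in unitDisk, ‖f ((p.1 : ℍ) + p.2 • i)‖ ^ 2

/-- The Bergman norm on `A_i(𝔹⁴)`. -/
def bergNormB (i : ℍ) (f : ℍ → ℍ) : ℝ := Real.sqrt (bergNormSqB i f)

/-- Membership in `A_i(𝔹⁴)`. -/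
def MemBergB (i : ℍ) (f : ℍ → ℍ) : Prop :=
  SliceRegularOn f B4 ∧
  IntegrableOn (fun p : ℝ × ℝ => ‖f ((p.1 : ℍ) + p.2 • i)‖ ^ 2) unitDisk

open Classical in
/-- `I_q`: the imaginary unit direction of `q` (an arbitrary fixed unit when `q` is real). -/
def Imu (q : ℍ) : ℍ := if q.im = 0 then ⟨0, 1, 0, 0⟩ else ‖q.im‖⁻¹ • q.im

/-- The extension operator `P_{k,·}`: for a slice function `g : ℝ² → ℍ` (representing
`x + y k ↦ g(x,y)`), `Pext k g (q) = ½[(1 + I_q k) g(x, −y) + (1 − I_q k) g(x, y)]`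
where `q = x + I_q y`, `y = ‖im q‖ ≥ 0`. -/
def Pext (k : ℍ) (g : ℝ × ℝ → ℍ) (q : ℍ) : ℍ :=
  (2⁻¹ : ℝ) • ((1 + Imu q * k) * g (q.re, -‖q.im‖) + (1 - Imu q * k) * g (q.re, ‖q.im‖))

/-- The slice function `x + y k ↦ a + b k + c l + d kl`. -/
def sliceFun (a b c d : ℝ × ℝ → ℝ) (k l : ℍ) (p : ℝ × ℝ) : ℍ :=
  (a p : ℍ) + b p • k + c p • l + d p • (k * l)

/-- `L²(D)` norm of a real function on the unit disk. -/
def L2D (a : ℝ × ℝ → ℝ) : ℝ := Real.sqrt (∫ p in unitDisk, a p ^ 2)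

/-- Finiteness of the `L²(D)` norm. -/
def MemL2D (a : ℝ × ℝ → ℝ) : Prop := IntegrableOn (fun p => a p ^ 2) unitDisk

/-- Harmonicity on the unit disk: `a` is `C²` and `∂²a/∂x² + ∂²a/∂y² = 0`. -/
def HarmonicOnDisk (a : ℝ × ℝ → ℝ) : Prop :=
  ContDiffOn ℝ 2 a unitDisk ∧ ∀ p ∈ unitDisk,
    fderiv ℝ (fun q => fderiv ℝ a q (1, 0)) p (1, 0)
      + fderiv ℝ (fun q => fderiv ℝ a q (0, 1)) p (0, 1) = 0

/-- `(a,b)` is a pair of conjugate harmonic functions on `D`: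
both harmonic and satisfying the Cauchy–Riemann equations. -/
def ConjHarmPair (a b : ℝ × ℝ → ℝ) : Prop :=
  HarmonicOnDisk a ∧ HarmonicOnDisk b ∧
  ∀ p ∈ unitDisk,
    fderiv ℝ a p (1, 0) = fderiv ℝ b p (0, 1) ∧
    fderiv ℝ a p (0, 1) = -fderiv ℝ b p (1, 0)

/-- `(a,b) ∈ HL²(D)`. -/
def HLpair (a b : ℝ × ℝ → ℝ) : Prop := ConjHarmPair a b ∧ MemL2D a ∧ MemL2D b

/-- Raw data of an element of `HL(D)`: a 2×2 matrix `(a b; c d)` of real functions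
on the disk together with a pair `(k,l)` of quaternions. -/
structure HLElem where
  a : ℝ × ℝ → ℝ
  b : ℝ × ℝ → ℝ
  c : ℝ × ℝ → ℝ
  d : ℝ × ℝ → ℝ
  k : ℍ
  l : ℍ

/-- Membership in `HL(D)`: `(a,b),(c,d) ∈ HL²(D)` and `(k,l) ∈ T`. -/
def HLElem.mem (A : HLElem) : Prop := HLpair A.a A.b ∧ HLpair A.c A.d ∧ OrthPair A.k A.l

/-- The bundle projection `P_{𝔹⁴}((a b; c d),(k,l)) = P_{k,l}[a + bk + cl + dkl]`. -/
def HLElem.proj (A : HLElem) : ℍ → ℍ := Pext A.k (sliceFun A.a A.b A.c A.d A.k A.l)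

/-- The metric of `HL(D)`. -/
def HLdist (A B : HLElem) : ℝ :=
  L2D (A.a - B.a) + L2D (A.b - B.b) + L2D (A.c - B.c) + L2D (A.d - B.d)
    + Real.sqrt (‖A.k - B.k‖ ^ 2 + ‖A.l - B.l‖ ^ 2)

/-- `Q_{k,l}[f] : (x,y) ↦ f(x + y k)`, the restriction of `f` to the slice `ℂ(k)`. -/
def Qsl (f : ℍ → ℍ) (k : ℍ) (p : ℝ × ℝ) : ℍ := f ((p.1 : ℍ) + p.2 • k)

/-- `D₁[f,k,l] = (Q[f] + conj(Q[f]))/2 = Re (Q[f])`. -/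
def Dc1 (f : ℍ → ℍ) (k _l : ℍ) (p : ℝ × ℝ) : ℝ := (Qsl f k p).re

/-- `D₂[f,k,l] = −(Q[f]·k + conj(Q[f]·k))/2 = −Re (Q[f]·k)`. -/
def Dc2 (f : ℍ → ℍ) (k _l : ℍ) (p : ℝ × ℝ) : ℝ := -(Qsl f k p * k).re

/-- `D₃[f,k,l] = −(Q[f]·l + conj(Q[f]·l))/2 = −Re (Q[f]·l)`. -/
def Dc3 (f : ℍ → ℍ) (k l : ℍ) (p : ℝ × ℝ) : ℝ := -(Qsl f k p * l).re

/-- `D₄[f,k,l] = (Q[f]·lk + conj(Q[f]·lk))/2 = Re (Q[f]·(lk))`. -/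
def Dc4 (f : ℍ → ℍ) (k l : ℍ) (p : ℝ × ℝ) : ℝ := (Qsl f k p * (l * k)).re

/-- The section map `S_{k,l}[f] = ((D₁ D₂; D₃ D₄), (k,l))`. -/
def Smap (f : ℍ → ℍ) (k l : ℍ) : HLElem :=
  ⟨Dc1 f k l, Dc2 f k l, Dc3 f k l, Dc4 f k l, k, l⟩

/-- The metric `ρ_i` on `A_i(𝔹⁴) × T`. -/
def rhoA (i : ℍ) (f : ℍ → ℍ) (k l : ℍ) (g : ℍ → ℍ) (m n : ℍ) : ℝ :=
  bergNormB i (f - g) + Real.sqrt (‖k - m‖ ^ 2 + ‖l - n‖ ^ 2)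

section Alg


lemma Sph2.normSq_eq {i : ℍ} (h : Sph2 i) : Quaternion.normSq i = 1 := by
  rw [Quaternion.normSq_eq_norm_mul_self, h.2, one_mul]

lemma Sph2.star_eq {i : ℍ} (h : Sph2 i) : star i = -i := Quaternion.star_eq_neg.2 h.1

lemma Sph2.neg {i : ℍ} (h : Sph2 i) : Sph2 (-i) := by
  constructor
  · simp [Sph2] at h ⊢; exact h.1
  · simpa using h.2

lemma Sph2.mul_self {i : ℍ} (h : Sph2 i) : i * i = -1 := by
  have h1 : i * star i = ((Quaternion.normSq i : ℝ) : ℍ) := Quaternion.self_mul_star i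
  rw [h.star_eq, h.normSq_eq, mul_neg] at h1
  have : (((1:ℝ):ℍ)) = 1 := by norm_num
  rw [this] at h1
  exact neg_eq_iff_eq_neg.mp h1

lemma re_mul_comm (a b : ℍ) : (a * b).re = (b * a).re := by
  simp only [Quaternion.re_mul]; ring

lemma OrthPair.re_mul {k l : ℍ} (h : OrthPair k l) : (k * l).re = 0 := by
  obtain ⟨hk, hl, ho⟩ := h
  rw [hl.star_eq, mul_neg, Quaternion.re_neg] at ho
  linarith

lemma OrthPair.anticomm {k l : ℍ} (h : OrthPair k l) : l * k = -(k * l) := by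
  have h2 : star (k * l) = l * k := by
    rw [star_mul, h.1.star_eq, h.2.1.star_eq, neg_mul_neg]
  rw [← h2]
  exact Quaternion.star_eq_neg.2 h.re_mul

lemma OrthPair.sph2_mul {k l : ℍ} (h : OrthPair k l) : Sph2 (k * l) :=
  ⟨h.re_mul, by rw [norm_mul, h.1.2, h.2.1.2, one_mul]⟩

/-- Reconstruction: a quaternion orthogonal to `1, k, l, kl` vanishes. -/
lemma reconstruct {k l : ℍ} (h : OrthPair k l) (q : ℍ)
    (h1 : q.re = 0) (h2 : (q * k).re = 0) (h3 : (q * l).re = 0)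
    (h4 : (q * (l * k)).re = 0) : q = 0 := by
  obtain ⟨hk, hl, -⟩ := id h
  have e1 : star q = -q := Quaternion.star_eq_neg.2 h1
  have e2 : k * q = -(q * k) := by
    have h' : star (q * k) = -(q * k) := Quaternion.star_eq_neg.2 h2
    rw [star_mul, hk.star_eq, e1, neg_mul_neg] at h'
    exact h'
  have e3 : l * q = -(q * l) := by
    have h' : star (q * l) = -(q * l) := Quaternion.star_eq_neg.2 h3
    rw [star_mul, hl.star_eq, e1, neg_mul_neg] at h'
    exact h'
  have e4 : k * (l * q) = q * (l * k) := by
    have h' : star (q * (l * k)) = -(q * (l * k)) := Quaternion.star_eq_neg.2 h4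
    rw [star_mul, star_mul, hk.star_eq, hl.star_eq, e1] at h'
    have heq : -k * -l * -q = -(k * (l * q)) := by
      rw [neg_mul_neg, mul_neg, mul_assoc]
    rw [heq] at h'
    exact neg_injective h'
  -- k*(l*q) = k*(-(q*l)) = -(k*q)*l = (q*k)*l = q*(k*l)
  have e5 : k * (l * q) = q * (k * l) := by
    rw [e3, mul_neg, ← mul_assoc, e2, neg_mul, neg_neg, mul_assoc]
  have e6 : q * (k * l) = -(q * (k * l)) := by
    have e6' := e5.symm.trans e4
    rwa [h.anticomm, mul_neg] at e6'
  have e7 : q * (k * l) = 0 := by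
    have := add_eq_zero_iff_eq_neg.2 e6
    have h2 : (2 : ℝ) • (q * (k * l)) = 0 := by
      rw [two_smul]; exact this
    simpa using h2
  have hne : (k * l) ≠ 0 := by
    intro hc
    have := h.sph2_mul.2
    rw [hc] at this; simp at this
  exact (mul_eq_zero.1 e7).resolve_right hne

end Alg
section Norms

lemma abs_re_le_norm (q : ℍ) : |q.re| ≤ ‖q‖ := by
  have h : q.re = inner ℝ q (1 : ℍ) := by
    simp [Quaternion.inner_def]
  rw [h]
  calc |inner ℝ q (1:ℍ)| ≤ ‖q‖ * ‖(1:ℍ)‖ := abs_real_inner_le_norm q 1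
  _ = ‖q‖ := by rw [norm_one, mul_one]

lemma norm_slice_sq {k : ℍ} (h : Sph2 k) (x y : ℝ) :
    ‖(x : ℍ) + y • k‖ ^ 2 = x ^ 2 + y ^ 2 := by
  have h1 := h.normSq_eq
  rw [Quaternion.normSq_def'] at h1
  rw [sq, ← Quaternion.normSq_eq_norm_mul_self, Quaternion.normSq_def']
  simp only [Quaternion.re_add, Quaternion.re_coe, Quaternion.re_smul, Quaternion.imI_add,
    Quaternion.imI_coe, Quaternion.imI_smul, Quaternion.imJ_add, Quaternion.imJ_coe,
    Quaternion.imJ_smul, Quaternion.imK_add, Quaternion.imK_coe, Quaternion.imK_smul,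
    smul_eq_mul, h.1, mul_zero, add_zero, zero_add]
  rw [h.1] at h1
  linear_combination y ^ 2 * h1

lemma slice_mem_B4 {k : ℍ} (h : Sph2 k) {p : ℝ × ℝ} (hp : p ∈ unitDisk) :
    ((p.1 : ℍ) + p.2 • k) ∈ B4 := by
  have h1 : ‖(p.1 : ℍ) + p.2 • k‖ ^ 2 = p.1 ^ 2 + p.2 ^ 2 := norm_slice_sq h p.1 p.2
  have h2 : p.1 ^ 2 + p.2 ^ 2 < 1 := hp
  have h3 : (0:ℝ) ≤ ‖(p.1 : ℍ) + p.2 • k‖ := norm_nonneg _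
  show ‖(p.1 : ℍ) + p.2 • k‖ < 1
  nlinarith

lemma norm_one_add_mul {k i : ℍ} (hk : Sph2 k) (hi : Sph2 i) :
    ‖1 + k * i‖ = ‖k - i‖ := by
  have h : (k - i) * i = 1 + k * i := by
    rw [sub_mul, hi.mul_self, sub_neg_eq_add, add_comm]
  rw [← h, norm_mul, hi.2, mul_one]

lemma norm_one_sub_mul {k i : ℍ} (hk : Sph2 k) (hi : Sph2 i) :
    ‖1 - k * i‖ = ‖k + i‖ := by
  have h : -((k + i) * i) = 1 - k * i := by
    rw [add_mul, hi.mul_self, neg_add, neg_neg, add_comm, ← sub_eq_add_neg]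
  rw [← h, norm_neg, norm_mul, hi.2, mul_one]

lemma norm_add_add_norm_sub_le {k i : ℍ} (hk : Sph2 k) (hi : Sph2 i) :
    ‖k + i‖ + ‖k - i‖ ≤ 2 * Real.sqrt 2 := by
  have hpar := parallelogram_law_with_norm ℝ k i
  rw [hk.2, hi.2] at hpar
  have h1 : ‖k + i‖ ^ 2 + ‖k - i‖ ^ 2 = 4 := by
    rw [hpar]; norm_num
  have hs := Real.sq_sqrt (by norm_num : (2:ℝ) ≥ 0).le
  have hs0 := Real.sqrt_nonneg 2
  nlinarith [sq_nonneg (‖k + i‖ - ‖k - i‖), norm_nonneg (k+i), norm_nonneg (k-i)]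

lemma le_sqrt_sq_add_sq (a b : ℝ) (ha : 0 ≤ a) : a ≤ Real.sqrt (a ^ 2 + b ^ 2) :=
  calc a = Real.sqrt (a ^ 2) := (Real.sqrt_sq ha).symm
  _ ≤ Real.sqrt (a ^ 2 + b ^ 2) := Real.sqrt_le_sqrt (by nlinarith)

lemma norm_mul_sub_mul_le {j i l k : ℍ} (hi : Sph2 i) (hl : Sph2 l) :
    ‖j * i - l * k‖ ≤ ‖j - l‖ + ‖i - k‖ := by
  have h : j * i - l * k = (j - l) * i + l * (i - k) := by noncomm_ring
  rw [h]
  calc ‖(j - l) * i + l * (i - k)‖ ≤ ‖(j-l)*i‖ + ‖l*(i-k)‖ := norm_add_le _ _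
  _ = ‖j - l‖ + ‖i - k‖ := by rw [norm_mul, norm_mul, hi.2, hl.2, mul_one, one_mul]

end Norms
section SliceRegBasics

def eI : ℍ := ⟨0,1,0,0⟩

lemma sph2_basisI : Sph2 eI := by
  refine ⟨rfl, ?_⟩
  have h : Quaternion.normSq eI = 1 := by
    rw [Quaternion.normSq_def']; norm_num [eI]
  rw [Quaternion.normSq_eq_norm_mul_self] at h
  nlinarith [norm_nonneg eI]

lemma exists_slice (q : ℍ) : ∃ (m : ℍ) (x y : ℝ), Sph2 m ∧ q = (x : ℍ) + y • m := by
  by_cases h0 : q.im = 0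
  · refine ⟨eI, q.re, 0, sph2_basisI, ?_⟩
    rw [zero_smul, add_zero]
    conv_lhs => rw [← Quaternion.re_add_im q, h0, add_zero]
  · set v : ℍ := q.im with hv
    have hv0 : v ≠ 0 := h0
    refine ⟨‖v‖⁻¹ • v, q.re, ‖v‖, ⟨?_, ?_⟩, ?_⟩
    · rw [Quaternion.re_smul, hv, Quaternion.re_im, smul_zero]
    · rw [norm_smul, norm_inv, norm_norm]
      exact inv_mul_cancel₀ (norm_ne_zero_iff.2 hv0)
    · rw [smul_smul, mul_inv_cancel₀ (norm_ne_zero_iff.2 hv0), one_smul, hv,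
        Quaternion.re_add_im]

lemma SliceRegularOn.diffAt {g : ℍ → ℍ} (hg : SliceRegularOn g B4) {q : ℍ}
    (hq : q ∈ B4) : DifferentiableAt ℝ g q := by
  obtain ⟨m, x, y, hm, rfl⟩ := exists_slice q
  exact (hg hm x y hq).1

/-- The real-linear embedding of a slice. -/
def sliceL (k : ℍ) : ℂ →L[ℝ] ℍ :=
  (Complex.reCLM.smulRight (1 : ℍ)) + (Complex.imCLM.smulRight k)

lemma sliceL_apply (k : ℍ) (z : ℂ) : sliceL k z = (z.re : ℍ) + z.im • k := by
  simp only [sliceL, ContinuousLinearMap.add_apply, ContinuousLinearMap.smulRight_apply,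
    Complex.reCLM_apply, Complex.imCLM_apply]
  congr 1
  apply Quaternion.ext <;> simp [Quaternion.re_one, Quaternion.imI_one, Quaternion.imJ_one, Quaternion.imK_one]

lemma sliceL_one (k : ℍ) : sliceL k 1 = 1 := by
  rw [sliceL_apply]; simp

lemma sliceL_I (k : ℍ) : sliceL k Complex.I = k := by
  rw [sliceL_apply]; simp

lemma sliceL_ofReal (k : ℍ) (r : ℝ) : sliceL k (r : ℂ) = (r : ℍ) := by
  rw [sliceL_apply]; simp

/-- Complex-valued coordinate pair along `(u,v)`. -/
def piQ (u v : ℍ) : ℍ →L[ℝ] ℂ :=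
  LinearMap.toContinuousLinearMap
  { toFun := fun q => ((q * u).re : ℂ) + (q * v).re * Complex.I
    map_add' := fun a b => by
      simp only [add_mul, Quaternion.re_add]
      push_cast
      ring
    map_smul' := fun r a => by
      simp only [smul_mul_assoc, Quaternion.re_smul, smul_eq_mul, RingHom.id_apply,
        Complex.real_smul]
      push_cast
      ring }

lemma piQ_apply (u v q : ℍ) : piQ u v q = ((q * u).re : ℂ) + (q * v).re * Complex.I := rfl

lemma piQ_re (u v q : ℍ) : (piQ u v q).re = (q * u).re := by
  rw [piQ_apply]; simp

lemma piQ_im (u v q : ℍ) : (piQ u v q).im = (q * v).re := by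
  rw [piQ_apply]; simp

lemma piQ1_comm {k : ℍ} (hk : Sph2 k) (q : ℍ) :
    piQ 1 (-k) (k * q) = Complex.I * piQ 1 (-k) q := by
  apply Complex.ext
  · rw [piQ_re]
    simp only [Complex.mul_re, Complex.I_re, Complex.I_im, zero_mul, one_mul, zero_sub,
      piQ_re, piQ_im, mul_one]
    rw [mul_neg, Quaternion.re_neg, neg_neg, re_mul_comm]
  · rw [piQ_im]
    simp only [Complex.mul_im, Complex.I_re, Complex.I_im, zero_mul, one_mul, add_zero,
      piQ_re, piQ_im, mul_one]
    rw [mul_neg, Quaternion.re_neg, mul_assoc, re_mul_comm, mul_assoc, hk.mul_self,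
      mul_neg_one, Quaternion.re_neg, neg_neg, zero_add]

lemma piQ2_comm {k l : ℍ} (hkl : OrthPair k l) (q : ℍ) :
    piQ (-l) (l * k) (k * q) = Complex.I * piQ (-l) (l * k) q := by
  have hk := hkl.1
  apply Complex.ext
  · rw [piQ_re]
    simp only [Complex.mul_re, Complex.I_re, Complex.I_im, zero_mul, one_mul, zero_sub,
      piQ_re, piQ_im]
    rw [mul_neg, Quaternion.re_neg, mul_assoc, re_mul_comm, mul_assoc]
  · rw [piQ_im]
    simp only [Complex.mul_im, Complex.I_re, Complex.I_im, zero_mul, one_mul, add_zero,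
      piQ_re, piQ_im]
    rw [mul_assoc, re_mul_comm, mul_assoc, mul_assoc l k k, hk.mul_self, mul_neg_one,
      mul_neg, Quaternion.re_neg, zero_add]

lemma clm_ext_complex {L M : ℂ →L[ℝ] ℂ} (h1 : L 1 = M 1)
    (hI : L Complex.I = M Complex.I) : L = M := by
  apply ContinuousLinearMap.ext
  intro v
  have hv : v = v.re • (1 : ℂ) + v.im • Complex.I := by
    apply Complex.ext <;> simp
  rw [hv]
  simp only [map_add, ContinuousLinearMap.map_smul, h1, hI]

end SliceRegBasics
section RepFormula

set_option maxHeartbeats 2000000 in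
lemma rep_formula {g : ℍ → ℍ} (hg : SliceRegularOn g B4) {i k l : ℍ} (hi : Sph2 i)
    (hkl : OrthPair k l) {x y : ℝ} (hxy : x ^ 2 + y ^ 2 < 1) :
    (2 : ℍ) * g ((x : ℍ) + y • k) =
      (1 - k * i) * g ((x : ℍ) + y • i) + (1 + k * i) * g ((x : ℍ) + (-y) • i) := by
  obtain ⟨hk, hl, -⟩ := id hkl
  set H : ℂ → ℍ := fun z => (2 : ℍ) * g (sliceL k z) - (1 - k * i) * g (sliceL i z)
      - (1 + k * i) * g (sliceL (-i) z) with hHdef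
  have hmem : ∀ (m : ℍ), Sph2 m → ∀ z ∈ Metric.ball (0 : ℂ) 1, sliceL m z ∈ B4 := by
    intro m hm z hz
    rw [sliceL_apply]
    have h1 : ‖z‖ < 1 := by simpa [Complex.dist_eq] using hz
    have h2 : ‖z‖ ^ 2 = z.re ^ 2 + z.im ^ 2 := by
      rw [Complex.sq_norm, Complex.normSq_apply]; ring
    have hz2 : z.re ^ 2 + z.im ^ 2 < 1 := by
      nlinarith [norm_nonneg z]
    exact slice_mem_B4 hm (p := (z.re, z.im)) hz2
  have key : ∀ z ∈ Metric.ball (0 : ℂ) 1,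
      DifferentiableAt ℝ H z ∧ fderiv ℝ H z 1 + k * fderiv ℝ H z Complex.I = 0 := by
    intro z hz
    have hk' := hmem k hk z hz
    have hi' := hmem i hi z hz
    have hmi' := hmem (-i) hi.neg z hz
    have d1 : HasFDerivAt (fun w => g (sliceL k w))
        ((fderiv ℝ g (sliceL k z)).comp (sliceL k)) z :=
      (hg.diffAt hk').hasFDerivAt.comp z (sliceL k).hasFDerivAt
    have d2 : HasFDerivAt (fun w => g (sliceL i w))
        ((fderiv ℝ g (sliceL i z)).comp (sliceL i)) z :=
      (hg.diffAt hi').hasFDerivAt.comp z (sliceL i).hasFDerivAt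
    have d3 : HasFDerivAt (fun w => g (sliceL (-i) w))
        ((fderiv ℝ g (sliceL (-i) z)).comp (sliceL (-i))) z :=
      (hg.diffAt hmi').hasFDerivAt.comp z (sliceL (-i)).hasFDerivAt
    have m1 : HasFDerivAt (fun w => (2:ℍ) * g (sliceL k w))
        (((ContinuousLinearMap.mul ℝ ℍ) (2:ℍ)).comp
          ((fderiv ℝ g (sliceL k z)).comp (sliceL k))) z :=
      (((ContinuousLinearMap.mul ℝ ℍ) (2:ℍ)).hasFDerivAt).comp z d1
    have m2 : HasFDerivAt (fun w => (1 - k * i) * g (sliceL i w))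
        (((ContinuousLinearMap.mul ℝ ℍ) (1 - k * i)).comp
          ((fderiv ℝ g (sliceL i z)).comp (sliceL i))) z :=
      (((ContinuousLinearMap.mul ℝ ℍ) (1 - k * i)).hasFDerivAt).comp z d2
    have m3 : HasFDerivAt (fun w => (1 + k * i) * g (sliceL (-i) w))
        (((ContinuousLinearMap.mul ℝ ℍ) (1 + k * i)).comp
          ((fderiv ℝ g (sliceL (-i) z)).comp (sliceL (-i)))) z :=
      (((ContinuousLinearMap.mul ℝ ℍ) (1 + k * i)).hasFDerivAt).comp z d3
    have hD : HasFDerivAt H ((((ContinuousLinearMap.mul ℝ ℍ) (2:ℍ)).comp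
          ((fderiv ℝ g (sliceL k z)).comp (sliceL k)))
        - (((ContinuousLinearMap.mul ℝ ℍ) (1 - k * i)).comp
          ((fderiv ℝ g (sliceL i z)).comp (sliceL i)))
        - (((ContinuousLinearMap.mul ℝ ℍ) (1 + k * i)).comp
          ((fderiv ℝ g (sliceL (-i) z)).comp (sliceL (-i))))) z :=
      (m1.sub m2).sub m3
    refine ⟨hD.differentiableAt, ?_⟩
    rw [hD.fderiv]
    simp only [ContinuousLinearMap.coe_sub', Pi.sub_apply,
      ContinuousLinearMap.coe_comp', Function.comp_apply, sliceL_one, sliceL_I,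
      ContinuousLinearMap.mul_apply']
    rw [sliceL_apply k z] at hk'
    rw [sliceL_apply i z] at hi'
    rw [sliceL_apply (-i) z] at hmi'
    have cr1 := (hg hk z.re z.im hk').2
    have cr2 := (hg hi z.re z.im hi').2
    have cr3 := (hg hi.neg z.re z.im hmi').2
    rw [← sliceL_apply k z] at cr1
    rw [← sliceL_apply i z] at cr2
    rw [← sliceL_apply (-i) z] at cr3
    have e1 : k * fderiv ℝ g (sliceL k z) k = -(fderiv ℝ g (sliceL k z) 1) :=
      eq_neg_of_add_eq_zero_right cr1
    have e2 : i * fderiv ℝ g (sliceL i z) i = -(fderiv ℝ g (sliceL i z) 1) :=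
      eq_neg_of_add_eq_zero_right cr2
    have e3 : (-i) * fderiv ℝ g (sliceL (-i) z) (-i) = -(fderiv ℝ g (sliceL (-i) z) 1) :=
      eq_neg_of_add_eq_zero_right cr3
    have hc1 : k * (1 - k * i) = (1 - k * i) * i := by
      rw [mul_sub, sub_mul, mul_one, one_mul, ← mul_assoc k k i, hk.mul_self,
        mul_assoc k i i, hi.mul_self, neg_one_mul, mul_neg_one, sub_neg_eq_add,
        sub_neg_eq_add, add_comm]
    have hc2 : k * (1 + k * i) = (1 + k * i) * (-i) := by
      rw [mul_add, add_mul, mul_one, one_mul, ← mul_assoc k k i, hk.mul_self,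
        mul_neg, mul_assoc k i i, hi.mul_self, neg_one_mul, mul_neg_one, neg_neg,
        add_comm]
    have t1 : k * ((2 : ℍ) * fderiv ℝ g (sliceL k z) k) = -((2:ℍ) * fderiv ℝ g (sliceL k z) 1) := by
      rw [two_mul, mul_add, e1, two_mul, neg_add]
    have t2 : k * ((1 - k * i) * fderiv ℝ g (sliceL i z) i)
        = -((1 - k * i) * fderiv ℝ g (sliceL i z) 1) := by
      rw [← mul_assoc, hc1, mul_assoc, e2, mul_neg]
    have t3 : k * ((1 + k * i) * fderiv ℝ g (sliceL (-i) z) (-i))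
        = -((1 + k * i) * fderiv ℝ g (sliceL (-i) z) 1) := by
      rw [← mul_assoc, hc2, mul_assoc, e3, mul_neg]
    rw [mul_sub, mul_sub, t1, t2, t3]
    abel
  have main : ∀ (u v : ℍ), (∀ q, piQ u v (k * q) = Complex.I * piQ u v q) →
      ∀ z ∈ Metric.ball (0 : ℂ) 1, piQ u v (H z) = 0 := by
    intro u v hcomm
    have hdiff : DifferentiableOn ℂ (fun z => piQ u v (H z)) (Metric.ball (0 : ℂ) 1) := by
      intro z hz
      obtain ⟨hd, hcr⟩ := key z hz
      have hFd : HasFDerivAt (fun w => piQ u v (H w)) ((piQ u v).comp (fderiv ℝ H z)) z :=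
        (piQ u v).hasFDerivAt.comp z hd.hasFDerivAt
      have hCRF : ((piQ u v).comp (fderiv ℝ H z)) Complex.I
          = Complex.I * ((piQ u v).comp (fderiv ℝ H z)) 1 := by
        simp only [ContinuousLinearMap.coe_comp', Function.comp_apply]
        have h1 : fderiv ℝ H z 1 = -(k * fderiv ℝ H z Complex.I) :=
          eq_neg_of_add_eq_zero_left hcr
        rw [h1, map_neg, hcomm, mul_neg, ← mul_assoc, Complex.I_mul_I, neg_one_mul, neg_neg]
      refine DifferentiableAt.differentiableWithinAt ?_
      rw [differentiableAt_iff_restrictScalars ℝ hFd.differentiableAt]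
      refine ⟨(((piQ u v).comp (fderiv ℝ H z)) 1) • (1 : ℂ →L[ℂ] ℂ), ?_⟩
      rw [hFd.fderiv]
      apply clm_ext_complex
      · simp only [ContinuousLinearMap.coe_restrictScalars', ContinuousLinearMap.smul_apply,
          ContinuousLinearMap.one_apply, smul_eq_mul, mul_one]
      · rw [ContinuousLinearMap.coe_restrictScalars']
        show (((piQ u v).comp (fderiv ℝ H z)) 1) • ((1 : ℂ →L[ℂ] ℂ) Complex.I) = _
        rw [ContinuousLinearMap.one_apply, smul_eq_mul, hCRF, mul_comm]
    have hzero : ∀ n : ℕ, piQ u v (H (((1 / (n + 1) : ℝ)) : ℂ)) = 0 := by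
      intro n
      have hH0 : H (((1 / (n + 1) : ℝ)) : ℂ) = 0 := by
        rw [hHdef]
        simp only [sliceL_ofReal]
        noncomm_ring
      rw [hH0, map_zero]
    have hfreq : ∃ᶠ z in nhdsWithin (0 : ℂ) {(0 : ℂ)}ᶜ, (fun z => piQ u v (H z)) z = 0 := by
      have htend : Filter.Tendsto (fun n : ℕ => (((1 / (n + 1) : ℝ)) : ℂ)) Filter.atTop
          (nhdsWithin (0 : ℂ) {(0 : ℂ)}ᶜ) := by
        apply tendsto_nhdsWithin_of_tendsto_nhds_of_eventually_within
        · have h0 := tendsto_one_div_add_atTop_nhds_zero_nat (𝕜 := ℝ)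
          have hc : Filter.Tendsto (fun r : ℝ => (r : ℂ)) (nhds 0) (nhds (((0:ℝ):ℂ))) :=
            Complex.continuous_ofReal.tendsto 0
          have hcc := hc.comp h0
          simpa [Function.comp_def, one_div] using hcc
        · refine Filter.Eventually.of_forall fun n => ?_
          simp only [Set.mem_compl_iff, Set.mem_singleton_iff]
          exact Complex.ofReal_ne_zero.mpr (by positivity)
      exact htend.frequently (Filter.Eventually.of_forall hzero).frequently
    intro z hz
    have heq := (hdiff.analyticOnNhd Metric.isOpen_ball).eqOn_zero_of_preconnected_of_frequently_eq_zero
      (convex_ball (0 : ℂ) 1).isPreconnected (Metric.mem_ball_self one_pos) hfreq hz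
    simpa using heq
  set z : ℂ := ⟨x, y⟩ with hzdef
  have hzre : z.re = x := rfl
  have hzim : z.im = y := rfl
  have hzball : z ∈ Metric.ball (0 : ℂ) 1 := by
    rw [Metric.mem_ball, Complex.dist_eq, sub_zero]
    have h2 : ‖z‖ ^ 2 = x ^ 2 + y ^ 2 := by
      rw [Complex.sq_norm, Complex.normSq_apply, hzre, hzim]; ring
    nlinarith [norm_nonneg z]
  have h1 := main 1 (-k) (piQ1_comm hk) z hzball
  have h2 := main (-l) (l * k) (piQ2_comm hkl) z hzball
  have hH0 : H z = 0 := by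
    apply reconstruct hkl
    · have h := congrArg Complex.re h1
      rwa [piQ_re, mul_one, Complex.zero_re] at h
    · have h := congrArg Complex.im h1
      rwa [piQ_im, Complex.zero_im, mul_neg, Quaternion.re_neg, neg_eq_zero] at h
    · have h := congrArg Complex.re h2
      rwa [piQ_re, Complex.zero_re, mul_neg, Quaternion.re_neg, neg_eq_zero] at h
    · have h := congrArg Complex.im h2
      rwa [piQ_im, Complex.zero_im] at h
  rw [hHdef] at hH0
  simp only [sliceL_apply, hzre, hzim] at hH0
  have hneg : (x : ℍ) + y • (-i) = (x : ℍ) + (-y) • i := by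
    rw [smul_neg, neg_smul]
  rw [hneg] at hH0
  rw [sub_sub] at hH0
  exact sub_eq_zero.mp hH0

end RepFormula
section Pointwise

lemma norm_two_H : ‖(2 : ℍ)‖ = 2 := by
  have h : ((2 : ℝ) : ℍ) = (2 : ℍ) := by norm_cast
  rw [← h, Quaternion.norm_coe]
  norm_num

lemma slice_norm_le {g : ℍ → ℍ} (hg : SliceRegularOn g B4) {i k l : ℍ} (hi : Sph2 i)
    (hkl : OrthPair k l) {x y : ℝ} (hxy : x ^ 2 + y ^ 2 < 1) :
    ‖g ((x : ℍ) + y • k)‖ ≤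
      (‖k + i‖ * ‖g ((x : ℍ) + y • i)‖ + ‖k - i‖ * ‖g ((x : ℍ) + (-y) • i)‖) / 2 := by
  have hrep := rep_formula hg hi hkl hxy
  have h2 : ‖(2 : ℍ) * g ((x : ℍ) + y • k)‖ = 2 * ‖g ((x : ℍ) + y • k)‖ := by
    rw [norm_mul, norm_two_H]
  have hb : ‖(1 - k * i) * g ((x : ℍ) + y • i) + (1 + k * i) * g ((x : ℍ) + (-y) • i)‖
      ≤ ‖k + i‖ * ‖g ((x : ℍ) + y • i)‖ + ‖k - i‖ * ‖g ((x : ℍ) + (-y) • i)‖ := by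
    calc ‖(1 - k * i) * g ((x : ℍ) + y • i) + (1 + k * i) * g ((x : ℍ) + (-y) • i)‖
        ≤ ‖(1 - k * i) * g ((x : ℍ) + y • i)‖ + ‖(1 + k * i) * g ((x : ℍ) + (-y) • i)‖ :=
          norm_add_le _ _
      _ = ‖k + i‖ * ‖g ((x : ℍ) + y • i)‖ + ‖k - i‖ * ‖g ((x : ℍ) + (-y) • i)‖ := by
          rw [norm_mul, norm_mul, norm_one_sub_mul hkl.1 hi, norm_one_add_mul hkl.1 hi]
  rw [← hrep, h2] at hb
  linarith

lemma slice_diff_le {g : ℍ → ℍ} (hg : SliceRegularOn g B4) {i k l : ℍ} (hi : Sph2 i)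
    (hkl : OrthPair k l) {x y : ℝ} (hxy : x ^ 2 + y ^ 2 < 1) :
    ‖g ((x : ℍ) + y • k) - g ((x : ℍ) + y • i)‖ ≤
      ‖k - i‖ * (‖g ((x : ℍ) + y • i)‖ + ‖g ((x : ℍ) + (-y) • i)‖) / 2 := by
  have hrep := rep_formula hg hi hkl hxy
  have e : (2 : ℍ) * (g ((x : ℍ) + y • k) - g ((x : ℍ) + y • i))
      = (1 + k * i) * (g ((x : ℍ) + (-y) • i) - g ((x : ℍ) + y • i)) := by
    rw [mul_sub, hrep]
    noncomm_ring
  have h2 : ‖(2 : ℍ) * (g ((x : ℍ) + y • k) - g ((x : ℍ) + y • i))‖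
      = 2 * ‖g ((x : ℍ) + y • k) - g ((x : ℍ) + y • i)‖ := by
    rw [norm_mul, norm_two_H]
  have hb : ‖(1 + k * i) * (g ((x : ℍ) + (-y) • i) - g ((x : ℍ) + y • i))‖
      ≤ ‖k - i‖ * (‖g ((x : ℍ) + y • i)‖ + ‖g ((x : ℍ) + (-y) • i)‖) := by
    rw [norm_mul, norm_one_add_mul hkl.1 hi]
    have := norm_sub_le (g ((x : ℍ) + (-y) • i)) (g ((x : ℍ) + y • i))
    have h0 : (0:ℝ) ≤ ‖k - i‖ := norm_nonneg _
    nlinarith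
  rw [← e, h2] at hb
  linarith

lemma comp_pointwise (F G Gi : ℍ) (u v : ℍ) (hu : ‖u‖ = 1) :
    |(F * u).re - (G * v).re| ≤ ‖F - Gi‖ + ‖Gi - G‖ + ‖G‖ * ‖u - v‖ := by
  have h1 : (F * u).re - (G * v).re = ((F * u) - (G * v)).re := by
    rw [Quaternion.re_sub]
  have h2 : F * u - G * v = (F - G) * u + G * (u - v) := by noncomm_ring
  calc |(F * u).re - (G * v).re| = |((F * u) - (G * v)).re| := by rw [h1]
    _ ≤ ‖F * u - G * v‖ := abs_re_le_norm _
    _ = ‖(F - G) * u + G * (u - v)‖ := by rw [h2]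
    _ ≤ ‖(F - G) * u‖ + ‖G * (u - v)‖ := norm_add_le _ _
    _ = ‖F - G‖ + ‖G‖ * ‖u - v‖ := by rw [norm_mul, norm_mul, hu, mul_one]
    _ ≤ (‖F - Gi‖ + ‖Gi - G‖) + ‖G‖ * ‖u - v‖ := by
        have := norm_sub_le_norm_sub_add_norm_sub F Gi G
        linarith
    _ = ‖F - Gi‖ + ‖Gi - G‖ + ‖G‖ * ‖u - v‖ := by ring

end Pointwise
section Integration

lemma isOpen_unitDisk : IsOpen unitDisk :=
  isOpen_lt (by fun_prop) continuous_const

lemma measurableSet_unitDisk : MeasurableSet unitDisk :=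
  isOpen_unitDisk.measurableSet

def toC : ℝ × ℝ → ℂ := fun p => ⟨p.1, p.2⟩

lemma toC_cont : Continuous toC := by
  have h : toC = fun p : ℝ × ℝ => (p.1 : ℂ) + (p.2 : ℂ) * Complex.I := by
    funext p
    show ({ re := p.1, im := p.2 } : ℂ) = _
    exact Complex.mk_eq_add_mul_I p.1 p.2
  rw [h]; fun_prop

lemma cont_sliceMap (m : ℍ) : Continuous (fun p : ℝ × ℝ => (p.1 : ℍ) + p.2 • m) := by
  have h : (fun p : ℝ × ℝ => (p.1 : ℍ) + p.2 • m) = (sliceL m) ∘ toC := by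
    funext p
    simp only [Function.comp_apply, sliceL_apply, toC]
  rw [h]; exact (sliceL m).continuous.comp toC_cont

lemma contOn_slice {g : ℍ → ℍ} (hg : SliceRegularOn g B4) {m : ℍ} (hm : Sph2 m) :
    ContinuousOn (fun p : ℝ × ℝ => g ((p.1 : ℍ) + p.2 • m)) unitDisk := by
  intro p hp
  have h2 : ContinuousAt (fun q : ℝ × ℝ => (q.1 : ℍ) + q.2 • m) p :=
    (cont_sliceMap m).continuousAt
  have h1 := ContinuousAt.comp (g := g) (f := fun q : ℝ × ℝ => (q.1 : ℍ) + q.2 • m)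
    (x := p) ((hg.diffAt (slice_mem_B4 hm hp)).continuousAt) h2
  exact h1.continuousWithinAt

lemma reflMP : MeasurePreserving (fun p : ℝ × ℝ => (p.1, -p.2)) volume volume := by
  have h1 : MeasurePreserving (Prod.map (id : ℝ → ℝ) (Neg.neg : ℝ → ℝ))
      (volume.prod volume) (volume.prod volume) :=
    (MeasurePreserving.id volume).prod (Measure.measurePreserving_neg volume)
  rw [← Measure.volume_eq_prod] at h1
  exact h1

lemma reflEmb : MeasurableEmbedding (fun p : ℝ × ℝ => (p.1, -p.2)) := by
  have h : (fun p : ℝ × ℝ => (p.1, -p.2))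
      = ((MeasurableEquiv.refl ℝ).prodCongr (Homeomorph.neg ℝ).toMeasurableEquiv
        : (ℝ × ℝ) ≃ᵐ (ℝ × ℝ)) := by
    funext p; rfl
  rw [h]
  exact MeasurableEquiv.measurableEmbedding _

lemma refl_preimage : (fun p : ℝ × ℝ => (p.1, -p.2)) ⁻¹' unitDisk = unitDisk := by
  ext p
  simp only [Set.mem_preimage, unitDisk, Set.mem_setOf_eq, neg_sq]

lemma integral_refl (h : ℝ × ℝ → ℝ) :
    ∫ p in unitDisk, h (p.1, -p.2) = ∫ p in unitDisk, h p := by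
  have key := reflMP.setIntegral_preimage_emb reflEmb h unitDisk
  rwa [refl_preimage] at key

lemma integrableOn_refl {h : ℝ × ℝ → ℝ} (hh : IntegrableOn h unitDisk) :
    IntegrableOn (fun p => h (p.1, -p.2)) unitDisk := by
  have key := (reflMP.integrableOn_comp_preimage reflEmb (f := h) (s := unitDisk)).2 hh
  rw [refl_preimage] at key
  exact key

lemma L2D_mono {a B : ℝ × ℝ → ℝ} (ha : ContinuousOn a unitDisk)
    (hB : IntegrableOn (fun p => B p ^ 2) unitDisk)
    (hab : ∀ p ∈ unitDisk, |a p| ≤ B p) :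
    Real.sqrt (∫ p in unitDisk, a p ^ 2) ≤ Real.sqrt (∫ p in unitDisk, B p ^ 2) := by
  have hmeas : AEStronglyMeasurable a (volume.restrict unitDisk) :=
    ha.aestronglyMeasurable measurableSet_unitDisk
  have hmeas2 : AEStronglyMeasurable (fun p => a p ^ 2) (volume.restrict unitDisk) := by
    have h := hmeas.mul hmeas
    convert h using 1; funext p; simp [sq]
  have hai : IntegrableOn (fun p => a p ^ 2) unitDisk := by
    apply Integrable.mono' hB hmeas2
    rw [MeasureTheory.ae_restrict_iff' measurableSet_unitDisk]
    refine Filter.Eventually.of_forall fun p hp => ?_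
    have h1 := hab p hp
    have h2 := abs_nonneg (a p)
    rw [Real.norm_eq_abs, abs_pow]
    exact pow_le_pow_left₀ h2 h1 2
  apply Real.sqrt_le_sqrt
  apply setIntegral_mono_on hai hB measurableSet_unitDisk
  intro p hp
  nlinarith [hab p hp, abs_nonneg (a p), sq_abs (a p)]

lemma L2D_sq_int_add {a b : ℝ × ℝ → ℝ}
    (ha : ContinuousOn a unitDisk) (hb : ContinuousOn b unitDisk)
    (hai : IntegrableOn (fun p => a p ^ 2) unitDisk)
    (hbi : IntegrableOn (fun p => b p ^ 2) unitDisk) :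
    IntegrableOn (fun p => (a p + b p) ^ 2) unitDisk := by
  have hma : AEStronglyMeasurable a (volume.restrict unitDisk) :=
    ha.aestronglyMeasurable measurableSet_unitDisk
  have hmb : AEStronglyMeasurable b (volume.restrict unitDisk) :=
    hb.aestronglyMeasurable measurableSet_unitDisk
  have hmab : AEStronglyMeasurable (fun p => (a p + b p) ^ 2) (volume.restrict unitDisk) := by
    have h := (hma.add hmb).mul (hma.add hmb)
    convert h using 1; funext p; simp [sq]
  have hbound : Integrable (fun p => 2 * (a p ^ 2 + b p ^ 2)) (volume.restrict unitDisk) := by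
    have h := (hai.add hbi).const_mul (2 : ℝ)
    simpa [Pi.add_apply] using h
  apply Integrable.mono' hbound hmab
  refine Filter.Eventually.of_forall fun p => ?_
  rw [Real.norm_eq_abs, abs_pow, sq_abs]
  nlinarith [sq_nonneg (a p - b p)]

lemma L2D_mul_int {a b : ℝ × ℝ → ℝ}
    (ha : ContinuousOn a unitDisk) (hb : ContinuousOn b unitDisk)
    (hai : IntegrableOn (fun p => a p ^ 2) unitDisk)
    (hbi : IntegrableOn (fun p => b p ^ 2) unitDisk) :
    IntegrableOn (fun p => a p * b p) unitDisk := by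
  have hma : AEStronglyMeasurable a (volume.restrict unitDisk) :=
    ha.aestronglyMeasurable measurableSet_unitDisk
  have hmb : AEStronglyMeasurable b (volume.restrict unitDisk) :=
    hb.aestronglyMeasurable measurableSet_unitDisk
  have hbound : Integrable (fun p => 1/2 * (a p ^ 2 + b p ^ 2)) (volume.restrict unitDisk) := by
    have h := (hai.add hbi).const_mul (1/2 : ℝ)
    simpa [Pi.add_apply] using h
  have hmab' : AEStronglyMeasurable (fun p => a p * b p) (volume.restrict unitDisk) := by
    exact hma.mul hmb
  apply Integrable.mono' hbound hmab'
  refine Filter.Eventually.of_forall fun p => ?_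
  rw [Real.norm_eq_abs, abs_mul]
  nlinarith [sq_nonneg (|a p| - |b p|), abs_nonneg (a p), abs_nonneg (b p),
    sq_abs (a p), sq_abs (b p)]

lemma L2D_add {a b : ℝ × ℝ → ℝ}
    (ha : ContinuousOn a unitDisk) (hb : ContinuousOn b unitDisk)
    (hai : IntegrableOn (fun p => a p ^ 2) unitDisk)
    (hbi : IntegrableOn (fun p => b p ^ 2) unitDisk) :
    Real.sqrt (∫ p in unitDisk, (a p + b p) ^ 2)
      ≤ Real.sqrt (∫ p in unitDisk, a p ^ 2) + Real.sqrt (∫ p in unitDisk, b p ^ 2) := by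
  have hma : AEStronglyMeasurable a (volume.restrict unitDisk) :=
    ha.aestronglyMeasurable measurableSet_unitDisk
  have hmb : AEStronglyMeasurable b (volume.restrict unitDisk) :=
    hb.aestronglyMeasurable measurableSet_unitDisk
  have habi := L2D_mul_int ha hb hai hbi
  set A := Real.sqrt (∫ p in unitDisk, a p ^ 2) with hA
  set B := Real.sqrt (∫ p in unitDisk, b p ^ 2) with hB
  have hA0 : 0 ≤ A := Real.sqrt_nonneg _
  have hB0 : 0 ≤ B := Real.sqrt_nonneg _
  have hA2 : A ^ 2 = ∫ p in unitDisk, a p ^ 2 :=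
    Real.sq_sqrt (setIntegral_nonneg measurableSet_unitDisk fun p _ => sq_nonneg _)
  have hB2 : B ^ 2 = ∫ p in unitDisk, b p ^ 2 :=
    Real.sq_sqrt (setIntegral_nonneg measurableSet_unitDisk fun p _ => sq_nonneg _)
  -- Cauchy–Schwarz
  have hCS : ∫ p in unitDisk, a p * b p ≤ A * B := by
    have h1 : ∫ p in unitDisk, a p * b p ≤ ∫ p in unitDisk, |a p| * |b p| := by
      have habsi : IntegrableOn (fun p => |a p| * |b p|) unitDisk := by
        have h := habi.abs
        simpa [abs_mul, IntegrableOn] using h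
      apply setIntegral_mono_on habi habsi measurableSet_unitDisk
      intro p _
      calc a p * b p ≤ |a p * b p| := le_abs_self _
        _ = |a p| * |b p| := abs_mul _ _
    have hpq : Real.HolderConjugate 2 2 := Real.HolderConjugate.two_two
    have h2ofReal : ENNReal.ofReal (2:ℝ) = (2 : ENNReal) := by
      simp
    have hmemA : MemLp (fun p => |a p|) (ENNReal.ofReal (2:ℝ)) (volume.restrict unitDisk) := by
      rw [h2ofReal]
      refine (memLp_two_iff_integrable_sq ?_).2 ?_
      · simpa [Real.norm_eq_abs] using hma.norm
      · simpa [sq_abs, IntegrableOn] using hai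
    have hmemB : MemLp (fun p => |b p|) (ENNReal.ofReal (2:ℝ)) (volume.restrict unitDisk) := by
      rw [h2ofReal]
      refine (memLp_two_iff_integrable_sq ?_).2 ?_
      · simpa [Real.norm_eq_abs] using hmb.norm
      · simpa [sq_abs, IntegrableOn] using hbi
    have h2 := integral_mul_le_Lp_mul_Lq_of_nonneg (μ := volume.restrict unitDisk)
      hpq (Filter.Eventually.of_forall fun p => abs_nonneg (a p))
      (Filter.Eventually.of_forall fun p => abs_nonneg (b p)) hmemA hmemB
    have hconva : (∫ p in unitDisk, |a p| ^ (2:ℝ)) = ∫ p in unitDisk, a p ^ 2 := by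
      congr 1; funext p; rw [Real.rpow_two, sq_abs]
    have hconvb : (∫ p in unitDisk, |b p| ^ (2:ℝ)) = ∫ p in unitDisk, b p ^ 2 := by
      congr 1; funext p; rw [Real.rpow_two, sq_abs]
    rw [hconva, hconvb] at h2
    rw [hA, hB, Real.sqrt_eq_rpow, Real.sqrt_eq_rpow]
    exact le_trans h1 h2
  have hexp : (fun p => (a p + b p) ^ 2)
      = fun p => a p ^ 2 + 2 * (a p * b p) + b p ^ 2 := by
    funext p; ring
  have hint : ∫ p in unitDisk, (a p + b p) ^ 2
      = (∫ p in unitDisk, a p ^ 2) + 2 * (∫ p in unitDisk, a p * b p)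
        + ∫ p in unitDisk, b p ^ 2 := by
    rw [hexp]
    have h2ab : Integrable (fun p => 2 * (a p * b p)) (volume.restrict unitDisk) :=
      habi.const_mul 2
    have h1 : Integrable (fun p => a p ^ 2 + 2 * (a p * b p)) (volume.restrict unitDisk) := by
      have h := hai.add h2ab
      exact h
    rw [integral_add h1 hbi, integral_add hai h2ab, integral_const_mul]
  have hfinal : ∫ p in unitDisk, (a p + b p) ^ 2 ≤ (A + B) ^ 2 := by
    rw [hint]; nlinarith
  calc Real.sqrt (∫ p in unitDisk, (a p + b p) ^ 2)
      ≤ Real.sqrt ((A + B) ^ 2) := Real.sqrt_le_sqrt hfinal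
    _ = A + B := Real.sqrt_sq (by positivity)

lemma L2D_smul {c : ℝ} (hc : 0 ≤ c) (a : ℝ × ℝ → ℝ) :
    Real.sqrt (∫ p in unitDisk, (c * a p) ^ 2)
      = c * Real.sqrt (∫ p in unitDisk, a p ^ 2) := by
  have h : (fun p => (c * a p) ^ 2) = fun p => c ^ 2 * a p ^ 2 := by
    funext p; ring
  rw [h, integral_const_mul, Real.sqrt_mul (sq_nonneg c), Real.sqrt_sq hc]

lemma L2D_triple {φ ψ ψ' d : ℝ × ℝ → ℝ} {α β : ℝ} (hα : 0 ≤ α) (hβ : 0 ≤ β)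
    (hφ : ContinuousOn φ unitDisk) (hψ : ContinuousOn ψ unitDisk)
    (hψ' : ContinuousOn ψ' unitDisk)
    (hφi : IntegrableOn (fun p => φ p ^ 2) unitDisk)
    (hψi : IntegrableOn (fun p => ψ p ^ 2) unitDisk)
    (hψ'i : IntegrableOn (fun p => ψ' p ^ 2) unitDisk)
    (hd : ContinuousOn d unitDisk)
    (hbd : ∀ p ∈ unitDisk, |d p| ≤ φ p + α * ψ p + β * ψ' p) :
    Real.sqrt (∫ p in unitDisk, d p ^ 2)
      ≤ Real.sqrt (∫ p in unitDisk, φ p ^ 2) + α * Real.sqrt (∫ p in unitDisk, ψ p ^ 2)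
        + β * Real.sqrt (∫ p in unitDisk, ψ' p ^ 2) := by
  have hψα : ContinuousOn (fun p => α * ψ p) unitDisk := continuousOn_const.mul hψ
  have hψ'β : ContinuousOn (fun p => β * ψ' p) unitDisk := continuousOn_const.mul hψ'
  have hψαi : IntegrableOn (fun p => (α * ψ p) ^ 2) unitDisk := by
    have h : (fun p => (α * ψ p) ^ 2) = fun p => α ^ 2 * ψ p ^ 2 := by funext p; ring
    rw [h]; exact hψi.const_mul _
  have hψ'βi : IntegrableOn (fun p => (β * ψ' p) ^ 2) unitDisk := by
    have h : (fun p => (β * ψ' p) ^ 2) = fun p => β ^ 2 * ψ' p ^ 2 := by funext p; ring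
    rw [h]; exact hψ'i.const_mul _
  have hsum1c : ContinuousOn (fun p => φ p + α * ψ p) unitDisk := hφ.add hψα
  have hsum1i : IntegrableOn (fun p => (φ p + α * ψ p) ^ 2) unitDisk :=
    L2D_sq_int_add hφ hψα hφi hψαi
  have hBi : IntegrableOn (fun p => ((φ p + α * ψ p) + β * ψ' p) ^ 2) unitDisk :=
    L2D_sq_int_add hsum1c hψ'β hsum1i hψ'βi
  have step1 : Real.sqrt (∫ p in unitDisk, d p ^ 2)
      ≤ Real.sqrt (∫ p in unitDisk, ((φ p + α * ψ p) + β * ψ' p) ^ 2) := by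
    apply L2D_mono hd hBi
    intro p hp
    have := hbd p hp
    linarith
  have step2 : Real.sqrt (∫ p in unitDisk, ((φ p + α * ψ p) + β * ψ' p) ^ 2)
      ≤ Real.sqrt (∫ p in unitDisk, (φ p + α * ψ p) ^ 2)
        + Real.sqrt (∫ p in unitDisk, (β * ψ' p) ^ 2) :=
    L2D_add hsum1c hψ'β hsum1i hψ'βi
  have step3 : Real.sqrt (∫ p in unitDisk, (φ p + α * ψ p) ^ 2)
      ≤ Real.sqrt (∫ p in unitDisk, φ p ^ 2) + Real.sqrt (∫ p in unitDisk, (α * ψ p) ^ 2) :=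
    L2D_add hφ hψα hφi hψαi
  rw [L2D_smul hα, L2D_smul hβ] at *
  linarith

end Integration
section Final

lemma component_bound {f g : ℍ → ℍ} {i k l : ℍ} (hi : Sph2 i) (hkl : OrthPair k l)
    (hf : MemBergB i f) (hg : MemBergB i g) {u v : ℍ} (hu : ‖u‖ = 1) {c : ℝ}
    (huv : ‖u - v‖ ≤ c) (hc : 0 ≤ c) :
    Real.sqrt (∫ p in unitDisk, ((Qsl f i p * u).re - (Qsl g k p * v).re) ^ 2)
      ≤ bergNormB i (f - g) + (‖k - i‖ + c * Real.sqrt 2) * bergNormB i g := by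
  have hk := hkl.1
  obtain ⟨hfreg, hfint⟩ := hf
  obtain ⟨hgreg, hgint⟩ := hg
  -- the three comparison functions
  set φ : ℝ × ℝ → ℝ := fun p => ‖f ((p.1 : ℍ) + p.2 • i) - g ((p.1 : ℍ) + p.2 • i)‖ with hφdef
  set ψ : ℝ × ℝ → ℝ := fun p => ‖g ((p.1 : ℍ) + p.2 • i)‖ with hψdef
  set ψ' : ℝ × ℝ → ℝ := fun p => ‖g ((p.1 : ℍ) + (-p.2) • i)‖ with hψ'def
  -- continuity
  have hfc := contOn_slice hfreg hi
  have hgc := contOn_slice hgreg hi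
  have hgkc := contOn_slice hgreg hk
  have hφc : ContinuousOn φ unitDisk := (hfc.sub hgc).norm
  have hψc : ContinuousOn ψ unitDisk := hgc.norm
  have hψ'c : ContinuousOn ψ' unitDisk := by
    have h : ψ' = fun p : ℝ × ℝ => ‖g ((p.1 : ℍ) + p.2 • (-i))‖ := by
      funext p; rw [hψ'def]; simp [neg_smul, smul_neg]
    rw [h]; exact (contOn_slice hgreg hi.neg).norm
  -- integrability of the squares
  have hψi : IntegrableOn (fun p => ψ p ^ 2) unitDisk := hgint
  have hψ'i : IntegrableOn (fun p => ψ' p ^ 2) unitDisk := by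
    have h := integrableOn_refl (h := fun p : ℝ × ℝ => ‖g ((p.1 : ℍ) + p.2 • i)‖ ^ 2) hgint
    simpa [hψ'def] using h
  have hφi : IntegrableOn (fun p => φ p ^ 2) unitDisk := by
    have hbound : Integrable
        (fun p : ℝ × ℝ => 2 * (‖f ((p.1 : ℍ) + p.2 • i)‖ ^ 2 + ‖g ((p.1 : ℍ) + p.2 • i)‖ ^ 2))
        (volume.restrict unitDisk) := by
      have h := (hfint.add hgint).const_mul (2 : ℝ)
      simpa [Pi.add_apply] using h
    have hm1 : AEStronglyMeasurable φ (volume.restrict unitDisk) :=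
      hφc.aestronglyMeasurable measurableSet_unitDisk
    have hm : AEStronglyMeasurable (fun p => φ p ^ 2) (volume.restrict unitDisk) := by
      have h := hm1.mul hm1
      convert h using 1; funext p; simp [sq]
    apply Integrable.mono' hbound hm
    refine Filter.Eventually.of_forall fun p => ?_
    rw [Real.norm_eq_abs, abs_pow, sq_abs]
    have h1 := norm_sub_le (f ((p.1 : ℍ) + p.2 • i)) (g ((p.1 : ℍ) + p.2 • i))
    have h2 := norm_nonneg (f ((p.1 : ℍ) + p.2 • i))
    have h3 := norm_nonneg (g ((p.1 : ℍ) + p.2 • i))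
    have h4 := norm_nonneg (f ((p.1 : ℍ) + p.2 • i) - g ((p.1 : ℍ) + p.2 • i))
    show ‖f ((p.1 : ℍ) + p.2 • i) - g ((p.1 : ℍ) + p.2 • i)‖ ^ 2 ≤ _
    nlinarith [pow_le_pow_left₀ h4 h1 2,
      sq_nonneg (‖f ((p.1 : ℍ) + p.2 • i)‖ - ‖g ((p.1 : ℍ) + p.2 • i)‖)]
  -- pointwise bound
  set α : ℝ := ‖k - i‖ / 2 + c * ‖k + i‖ / 2 with hαdef
  set β : ℝ := ‖k - i‖ / 2 + c * ‖k - i‖ / 2 with hβdef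
  have hα : 0 ≤ α := by positivity
  have hβ : 0 ≤ β := by positivity
  have hd : ContinuousOn (fun p => (Qsl f i p * u).re - (Qsl g k p * v).re) unitDisk := by
    apply ContinuousOn.sub
    · exact Quaternion.continuous_re.comp_continuousOn (hfc.mul continuousOn_const)
    · exact Quaternion.continuous_re.comp_continuousOn (hgkc.mul continuousOn_const)
  have hbd : ∀ p ∈ unitDisk,
      |(Qsl f i p * u).re - (Qsl g k p * v).re| ≤ φ p + α * ψ p + β * ψ' p := by
    intro p hp
    have hp' : p.1 ^ 2 + p.2 ^ 2 < 1 := hp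
    have hcp := comp_pointwise (Qsl f i p) (Qsl g k p) (Qsl g i p) u v hu
    have hdiff : ‖Qsl g i p - Qsl g k p‖
        ≤ ‖k - i‖ * (ψ p + ψ' p) / 2 := by
      rw [norm_sub_rev]
      exact slice_diff_le hgreg hi hkl hp'
    have hGn : ‖Qsl g k p‖ ≤ (‖k + i‖ * ψ p + ‖k - i‖ * ψ' p) / 2 :=
      slice_norm_le hgreg hi hkl hp'
    have hφeq : ‖Qsl f i p - Qsl g i p‖ = φ p := rfl
    have hG0 := norm_nonneg (Qsl g k p)
    have hprod : ‖Qsl g k p‖ * ‖u - v‖ ≤ ((‖k + i‖ * ψ p + ‖k - i‖ * ψ' p) / 2) * c := by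
      apply mul_le_mul hGn huv (norm_nonneg _)
      positivity
    rw [hφeq] at hcp
    rw [hαdef, hβdef]
    nlinarith [hcp, hdiff, hprod]
  have hkey := L2D_triple hα hβ hφc hψc hψ'c hφi hψi hψ'i hd hbd
  -- identify the Bergman norms
  have hbfg : bergNormB i (f - g) = Real.sqrt (∫ p in unitDisk, φ p ^ 2) := rfl
  have hbg : bergNormB i g = Real.sqrt (∫ p in unitDisk, ψ p ^ 2) := rfl
  have hbg' : Real.sqrt (∫ p in unitDisk, ψ' p ^ 2) = bergNormB i g := by
    rw [hbg]
    congr 1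
    have h := integral_refl (fun p : ℝ × ℝ => ‖g ((p.1 : ℍ) + p.2 • i)‖ ^ 2)
    simpa [hψ'def, hψdef] using h
  rw [hbg', ← hbg, ← hbfg] at hkey
  have hγ0 : 0 ≤ bergNormB i g := Real.sqrt_nonneg _
  have hs2 : ‖k + i‖ + ‖k - i‖ ≤ 2 * Real.sqrt 2 := norm_add_add_norm_sub_le hk hi
  have hs2' : 0 ≤ Real.sqrt 2 := Real.sqrt_nonneg 2
  have hki0 : (0:ℝ) ≤ ‖k + i‖ := norm_nonneg _
  have hki0' : (0:ℝ) ≤ ‖k - i‖ := norm_nonneg _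
  calc Real.sqrt (∫ p in unitDisk, ((Qsl f i p * u).re - (Qsl g k p * v).re) ^ 2)
      ≤ bergNormB i (f - g) + α * bergNormB i g + β * bergNormB i g := hkey
    _ ≤ bergNormB i (f - g) + (‖k - i‖ + c * Real.sqrt 2) * bergNormB i g := by
        rw [hαdef, hβdef]
        nlinarith [mul_nonneg hc hγ0, mul_nonneg (mul_nonneg hc hγ0) hki0',
          mul_nonneg hγ0 hki0']

end Final

/-- Estimate for the component map: the `HL(D)` distance between the component data of
`(f,(i,j))` and `(g,(k,l))` is controlled by `ρ_i`. -/
theorem components_estimate (i j k l : ℍ) (hij : OrthPair i j) (hkl : OrthPair k l)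
    (f g : ℍ → ℍ) (hf : MemBergB i f) (hg : MemBergB i g) :
    HLdist (Smap f i j) (Smap g k l)
      ≤ 4 * (1 + (1 + Real.sqrt 2) * bergNormB i g) * rhoA i f i j g k l := by
  obtain ⟨hi, hj, hijo⟩ := id hij
  obtain ⟨hk, hl, hklo⟩ := id hkl
  have hnk : ‖k - i‖ = ‖i - k‖ := norm_sub_rev k i
  -- the four component estimates
  have h1 := component_bound (u := (1:ℍ)) (v := (1:ℍ)) (c := 0) hi hkl hf hg norm_one
    (by simp) le_rfl
  have h2 := component_bound (u := -i) (v := -k) (c := ‖i - k‖) hi hkl hf hg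
    (by rw [norm_neg, hi.2])
    (by rw [show (-i : ℍ) - -k = -(i - k) by abel, norm_neg]) (norm_nonneg _)
  have h3 := component_bound (u := -j) (v := -l) (c := ‖j - l‖) hi hkl hf hg
    (by rw [norm_neg, hj.2])
    (by rw [show (-j : ℍ) - -l = -(j - l) by abel, norm_neg]) (norm_nonneg _)
  have h4 := component_bound (u := j * i) (v := l * k) (c := ‖j - l‖ + ‖i - k‖) hi hkl hf hg
    (by rw [norm_mul, hj.2, hi.2, mul_one])
    (norm_mul_sub_mul_le hi hl)
    (add_nonneg (norm_nonneg _) (norm_nonneg _))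
  -- rewrite the L2D distances
  have q1 : L2D (Dc1 f i j - Dc1 g k l)
      = Real.sqrt (∫ p in unitDisk,
          ((Qsl f i p * (1:ℍ)).re - (Qsl g k p * (1:ℍ)).re) ^ 2) := by
    unfold L2D
    congr 1
    congr 1
    funext p
    simp only [Pi.sub_apply, Dc1, mul_one]
  have q2 : L2D (Dc2 f i j - Dc2 g k l)
      = Real.sqrt (∫ p in unitDisk,
          ((Qsl f i p * (-i)).re - (Qsl g k p * (-k)).re) ^ 2) := by
    unfold L2D
    congr 1
    congr 1
    funext p
    simp only [Pi.sub_apply, Dc2, mul_neg, Quaternion.re_neg]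
  have q3 : L2D (Dc3 f i j - Dc3 g k l)
      = Real.sqrt (∫ p in unitDisk,
          ((Qsl f i p * (-j)).re - (Qsl g k p * (-l)).re) ^ 2) := by
    unfold L2D
    congr 1
    congr 1
    funext p
    simp only [Pi.sub_apply, Dc3, mul_neg, Quaternion.re_neg]
  have q4 : L2D (Dc4 f i j - Dc4 g k l)
      = Real.sqrt (∫ p in unitDisk,
          ((Qsl f i p * (j * i)).re - (Qsl g k p * (l * k)).re) ^ 2) := rfl
  have hdist : HLdist (Smap f i j) (Smap g k l)
      = L2D (Dc1 f i j - Dc1 g k l) + L2D (Dc2 f i j - Dc2 g k l)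
        + L2D (Dc3 f i j - Dc3 g k l) + L2D (Dc4 f i j - Dc4 g k l)
        + Real.sqrt (‖i - k‖ ^ 2 + ‖j - l‖ ^ 2) := rfl
  have hrho : rhoA i f i j g k l
      = bergNormB i (f - g) + Real.sqrt (‖i - k‖ ^ 2 + ‖j - l‖ ^ 2) := rfl
  rw [hdist, q1, q2, q3, q4, hrho]
  rw [hnk] at h1 h2 h3 h4
  -- abbreviations
  set a := ‖i - k‖ with hadef
  set b := ‖j - l‖ with hbdef
  set ε := Real.sqrt (a ^ 2 + b ^ 2) with hεdef
  set A := bergNormB i (f - g) with hAdef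
  set γ := bergNormB i g with hγdef
  have hA0 : 0 ≤ A := Real.sqrt_nonneg _
  have hγ0 : 0 ≤ γ := Real.sqrt_nonneg _
  have hε0 : 0 ≤ ε := Real.sqrt_nonneg _
  have hs2 : 0 ≤ Real.sqrt 2 := Real.sqrt_nonneg 2
  have haε : a ≤ ε := le_sqrt_sq_add_sq a b (norm_nonneg _)
  have hbε : b ≤ ε := by
    have h := le_sqrt_sq_add_sq b a (norm_nonneg _)
    rwa [add_comm] at h
  have key1 : ((ε - a) * γ) ≥ 0 := mul_nonneg (sub_nonneg.2 haε) hγ0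
  have key2 : ((ε - b) * γ) ≥ 0 := mul_nonneg (sub_nonneg.2 hbε) hγ0
  have key3 : Real.sqrt 2 * ((ε - a) * γ) ≥ 0 := mul_nonneg hs2 key1
  have key4 : Real.sqrt 2 * ((ε - b) * γ) ≥ 0 := mul_nonneg hs2 key2
  have key5 : γ * A ≥ 0 := mul_nonneg hγ0 hA0
  have key6 : Real.sqrt 2 * (γ * A) ≥ 0 := mul_nonneg hs2 key5
  have key7 : γ * ε ≥ 0 := mul_nonneg hγ0 hε0
  have key8 : Real.sqrt 2 * (γ * ε) ≥ 0 := mul_nonneg hs2 key7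
  nlinarith [h1, h2, h3, h4, key1, key2, key3, key4, key5, key6, key7, key8, hε0]
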